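/- For every set partition word p with N(p) distinct letters, the word φ_{aba}^{N(p)}(p) is sorted, i.e., applying the map φ_{aba} at most N(p) times sorts any set partition. -/

import Mathlib

/-- West's stack-sorting map, implemented with an explicit stack (top = head). -/
def sWestAux : List ℕ → List ℕ → List ℕ
  | [], st => st
  | x :: xs, [] => sWestAux xs [x]
  | x :: xs, t :: st =>
      if t < x then t :: sWestAux (x :: xs) st
      else sWestAux xs (x :: t :: st)
termination_by l st => 2 * l.length + st.length

def sWest (l : List ℕ) : List ℕ := sWestAux l []

/-- A word contains a subsequence equivalent to `aba`. -/
def HasABA (l : List ℕ) : Prop :=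
  ∃ i j k : Fin l.length, i < j ∧ j < k ∧ l.get i = l.get k ∧ l.get j ≠ l.get i

instance (l : List ℕ) : Decidable (HasABA l) := by
  unfold HasABA; infer_instance

/-- Xia's stack-sorting map φ_{aba}, with explicit stack (top = head). -/
def phiAux : List ℕ → List ℕ → List ℕ
  | [], st => st
  | x :: xs, [] => phiAux xs [x]
  | x :: xs, t :: st =>
      if HasABA (x :: t :: st) then t :: phiAux (x :: xs) st
      else phiAux xs (x :: t :: st)
termination_by l st => 2 * l.length + st.length

def phi (p : List ℕ) : List ℕ := phiAux p []

/-- A set partition word is sorted: all occurrences of each letter are consecutive. -/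
def SortedWord (p : List ℕ) : Prop :=
  ∀ i j k : Fin p.length, i < j → j < k → p.get i = p.get k → p.get j = p.get i

/-- Number of distinct letters. -/
def Nletters (p : List ℕ) : ℕ := p.toFinset.card

def Avoids231 (l : List ℕ) : Prop :=
  ¬ ∃ i j k : Fin l.length, i < j ∧ j < k ∧ l.get k < l.get i ∧ l.get i < l.get j


lemma phiAux_nil (st : List ℕ) : phiAux [] st = st := by rw [phiAux]

lemma phiAux_cons_nil (x : ℕ) (xs : List ℕ) : phiAux (x :: xs) [] = phiAux xs [x] := by
  rw [phiAux]

lemma phiAux_pop {x t : ℕ} {st : List ℕ} (h : HasABA (x :: t :: st)) (xs : List ℕ) :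
    phiAux (x :: xs) (t :: st) = t :: phiAux (x :: xs) st := by
  rw [phiAux, if_pos h]

lemma phiAux_push {x t : ℕ} {st : List ℕ} (h : ¬ HasABA (x :: t :: st)) (xs : List ℕ) :
    phiAux (x :: xs) (t :: st) = phiAux xs (x :: t :: st) := by
  rw [phiAux, if_neg h]

lemma phiAux_perm : ∀ inp st : List ℕ, (phiAux inp st).Perm (inp ++ st)
  | [], st => by simp [phiAux_nil]
  | x :: xs, [] => by
      rw [phiAux_cons_nil]
      exact (phiAux_perm xs [x]).trans (by simpa using List.perm_middle (a:=x) (l₁:=xs) (l₂:=[]))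
  | x :: xs, t :: st => by
      by_cases h : HasABA (x :: t :: st)
      · rw [phiAux_pop h]
        refine ((phiAux_perm (x :: xs) st).cons t).trans ?_
        refine (List.Perm.swap x t (xs ++ st)).trans ?_
        exact (List.perm_middle.symm).cons x
      · rw [phiAux_push h]
        exact (phiAux_perm xs (x :: t :: st)).trans List.perm_middle
termination_by inp st => 2 * inp.length + st.length

lemma hasABA_iff {l : List ℕ} : HasABA l ↔ ∃ c d : ℕ, c ≠ d ∧ List.Sublist [c, d, c] l := by
  constructor
  · rintro ⟨i, j, k, hij, hjk, hik, hji⟩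
    refine ⟨l.get i, l.get j, Ne.symm hji, ?_⟩
    have h : List.Sublist (List.map l.get [i, j, k]) l := by
      apply List.map_getElem_sublist
      simp only [List.pairwise_cons, List.mem_cons, List.mem_singleton, List.not_mem_nil]
      refine ⟨?_, ?_, fun a h => h.elim, List.Pairwise.nil⟩
      · rintro a (rfl | rfl | h); exacts [hij, hij.trans hjk, h.elim]
      · rintro a (rfl | h); exacts [hjk, h.elim]
    simp only [List.map] at h
    simp only [List.get_eq_getElem] at hik ⊢
    simp only [List.get_eq_getElem] at h
    rw [show l[(k:ℕ)] = l[(i:ℕ)] from hik.symm] at h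
    exact h
  · rintro ⟨c, d, hcd, hsub⟩
    obtain ⟨is, h1, h2⟩ := List.sublist_eq_map_getElem hsub
    rcases is with _ | ⟨i, _ | ⟨j, _ | ⟨k, _ | ⟨m, rest⟩⟩⟩⟩ <;> simp at h1
    obtain ⟨hc, hd, hc2⟩ := h1
    simp only [List.pairwise_cons, List.mem_cons, List.mem_singleton, List.not_mem_nil] at h2
    refine ⟨i, j, k, h2.1 j (Or.inl rfl), (h2.2).1 k (Or.inl rfl), ?_, ?_⟩
    · simp only [List.get_eq_getElem]; rw [← hc, ← hc2]
    · simp only [List.get_eq_getElem]; rw [← hd, ← hc]; exact hcd.symm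

lemma hasABA_mono {l l' : List ℕ} (h : l.Sublist l') (hl : HasABA l) : HasABA l' := by
  rw [hasABA_iff] at hl ⊢
  obtain ⟨c, d, hcd, hs⟩ := hl
  exact ⟨c, d, hcd, hs.trans h⟩

lemma not_hasABA_mono {l l' : List ℕ} (h : l.Sublist l') (hl : ¬ HasABA l') : ¬ HasABA l :=
  fun hh => hl (hasABA_mono h hh)

def Bad (a : ℕ) (l : List ℕ) : Prop := ∃ b, b ≠ a ∧ List.Sublist [a, b, a] l

lemma bad_mono {a : ℕ} {l l' : List ℕ} (h : l.Sublist l') (hb : Bad a l) : Bad a l' := by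
  obtain ⟨b, hb1, hb2⟩ := hb; exact ⟨b, hb1, hb2.trans h⟩

lemma hasABA_iff_bad {l : List ℕ} : HasABA l ↔ ∃ a, Bad a l := by
  rw [hasABA_iff]
  constructor
  · rintro ⟨c, d, h1, h2⟩; exact ⟨c, d, (Ne.symm h1), h2⟩
  · rintro ⟨a, b, h1, h2⟩; exact ⟨a, b, (Ne.symm h1), h2⟩

lemma sortedWord_iff {p : List ℕ} : SortedWord p ↔ ¬ HasABA p := by
  unfold SortedWord HasABA
  push_neg
  constructor
  · intro h i j k hij hjk hik; exact h i j k hij hjk hik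
  · intro h i j k hij hjk hik; exact h i j k hij hjk hik

lemma not_hasABA_cons {x : ℕ} {st : List ℕ} (hx : x ∉ st) (h : ¬ HasABA st) :
    ¬ HasABA (x :: st) := by
  rw [hasABA_iff]
  rintro ⟨c, d, hcd, hs⟩
  rcases List.sublist_cons_iff.mp hs with h' | ⟨r, hr, hr'⟩
  · exact h (hasABA_iff.mpr ⟨c, d, hcd, h'⟩)
  · obtain rfl : x = c := by injection hr with h1 _; exact h1.symm
    have : r = [d, x] := by injection hr with _ h2; exact h2.symm
    subst this
    exact hx (hr'.subset (by simp))

/-- removing one of two adjacent duplicates preserves HasABA -/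
lemma hasABA_dedup {u v : List ℕ} {x : ℕ} (h : HasABA (u ++ x :: x :: v)) :
    HasABA (u ++ x :: v) := by
  rw [hasABA_iff] at h ⊢
  obtain ⟨c, d, hcd, hs⟩ := h
  refine ⟨c, d, hcd, ?_⟩
  rw [List.sublist_append_iff] at hs
  obtain ⟨s1, s2, heq, hs1, hs2⟩ := hs
  rw [List.sublist_append_iff]
  refine ⟨s1, s2, heq, hs1, ?_⟩
  rcases List.sublist_cons_iff.mp hs2 with h' | ⟨r, hr, hr'⟩
  · exact h'
  · rcases List.sublist_cons_iff.mp hr' with h'' | ⟨r2, hr2, hr2'⟩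
    · exact hr ▸ h''.cons₂ x
    · -- s2 = x :: x :: r2, a chunk of [c,d,c] with equal adjacent letters: impossible
      exfalso
      subst hr2; subst hr
      rcases s1 with _ | ⟨e, _ | ⟨f, _ | ⟨g, s⟩⟩⟩ <;> simp at heq <;> apply hcd
      · exact heq.1.trans heq.2.1.symm
      · exact heq.2.2.1.trans heq.2.1.symm

def GoodDecomp (a : ℕ) (l : List ℕ) : Prop :=
  ∃ u k v, l = u ++ List.replicate k a ++ v ∧ a ∉ u ∧ a ∉ v

lemma goodDecomp_not_bad {a : ℕ} {l : List ℕ} (h : GoodDecomp a l) : ¬ Bad a l := by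
  obtain ⟨u, k, v, rfl, hu, hv⟩ := h
  rintro ⟨b, hb, hs⟩
  rw [List.append_assoc, List.sublist_append_iff] at hs
  obtain ⟨s1, s2, heq, hs1, hs2⟩ := hs
  have h1 : a ∉ s1 := fun hm => hu (hs1.subset hm)
  have hs1nil : s1 = [] := by
    rcases s1 with _ | ⟨e, s1'⟩
    · rfl
    · exfalso; apply h1
      have : e = a := by
        rcases s1' with _ | _ <;> simp at heq <;> tauto
      simp [this]
  subst hs1nil
  simp only [List.nil_append] at heq
  subst heq
  rw [List.sublist_append_iff] at hs2
  obtain ⟨t1, t2, heq, ht1, ht2⟩ := hs2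
  have h2 : a ∉ t2 := fun hm => hv (ht2.subset hm)
  have h3 : ∀ c ∈ t1, c = a := fun c hc => by
    obtain ⟨n, _, rfl⟩ := List.sublist_replicate_iff.mp ht1
    exact List.eq_of_mem_replicate hc
  rcases t2.eq_nil_or_concat with rfl | ⟨t2', y, rfl⟩
  · rw [List.append_nil] at heq
    exact hb (h3 b (by rw [← heq]; simp))
  · apply h2
    have hy : some a = some y := by
      have := congrArg List.getLast? heq
      simpa using this
    rw [Option.some.injEq] at hy
    simp [hy]

lemma not_bad_goodDecomp {a : ℕ} : ∀ {l : List ℕ}, ¬ Bad a l → GoodDecomp a l := by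
  intro l
  induction l with
  | nil => intro _; exact ⟨[], 0, [], by simp, by simp, by simp⟩
  | cons c l' ih =>
    intro h
    obtain ⟨u, k, v, heq, hu, hv⟩ := ih (fun hb => h (bad_mono (List.sublist_cons_self c l') hb))
    by_cases hca : c = a
    · rcases u with _ | ⟨b, u'⟩
      · exact ⟨[], k + 1, v, by simp [heq, hca, List.replicate_succ], by simp, hv⟩
      · have hba : b ≠ a := fun hh => hu (by simp [hh])
        by_cases hk : k = 0
        · refine ⟨[], 1, b :: u' ++ v, ?_, by simp, ?_⟩
          · subst hk; simpa [hca] using heq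
          · intro hm
            rcases List.mem_append.mp hm with h1 | h1
            · exact hu (by simpa using h1)
            · exact hv h1
        · exfalso
          apply h
          refine ⟨b, hba, ?_⟩
          rw [heq, hca]
          refine List.Sublist.cons₂ _ (List.Sublist.cons₂ _ ?_)
          rw [List.singleton_sublist]
          simp [List.mem_replicate, hk]
    · refine ⟨c :: u, k, v, by simp [heq], ?_, hv⟩
      intro hm
      rcases List.mem_cons.mp hm with h1 | h1
      · exact hca h1.symm
      · exact hu h1

lemma not_hasABA_nil : ¬ HasABA ([] : List ℕ) := by
  rw [hasABA_iff]; rintro ⟨c, d, _, hs⟩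
  simpa using hs.length_le

lemma goodDecomp_cons {a c : ℕ} {l : List ℕ} (hc : c ≠ a) (h : GoodDecomp a l) :
    GoodDecomp a (c :: l) := by
  obtain ⟨u, k, v, rfl, hu, hv⟩ := h
  exact ⟨c :: u, k, v, by simp, by simp [hu, Ne.symm hc], hv⟩

lemma mem_phiAux {a : ℕ} {inp st : List ℕ} :
    a ∈ phiAux inp st ↔ a ∈ inp ∨ a ∈ st := by
  rw [(phiAux_perm inp st).mem_iff, List.mem_append]

lemma hasABA_collapse {x : ℕ} {u v : List ℕ} :
    ∀ k, HasABA (u ++ List.replicate (k + 1) x ++ v) → HasABA (u ++ x :: v) := by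
  intro k
  induction k with
  | zero => simp
  | succ k ih =>
    intro h
    apply ih
    have h' : HasABA (u ++ x :: x :: (List.replicate k x ++ v)) := by
      have e : u ++ List.replicate (k + 1 + 1) x ++ v
          = u ++ x :: x :: (List.replicate k x ++ v) := by
        simp [List.replicate_succ]
      rwa [e] at h
    have := hasABA_dedup h'
    have e2 : u ++ x :: (List.replicate k x ++ v) = u ++ List.replicate (k + 1) x ++ v := by
      simp [List.replicate_succ]
    rwa [e2] at this

lemma sublist_cons_append_replicate (x a : ℕ) (st : List ℕ) (k : ℕ) :
    List.Sublist (x :: a :: st) (x :: a :: (List.replicate k a ++ st)) := by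
  refine List.Sublist.cons₂ _ (List.Sublist.cons₂ _ ?_)
  exact List.sublist_append_right _ _

lemma popRun {x a : ℕ} {st : List ℕ} (h : HasABA (x :: a :: st)) :
    ∀ (k : ℕ) (xs : List ℕ),
      phiAux (x :: xs) (List.replicate k a ++ st) =
        List.replicate k a ++ phiAux (x :: xs) st := by
  intro k
  induction k with
  | zero => simp
  | succ k ih =>
    intro xs
    rw [List.replicate_succ, List.cons_append,
      phiAux_pop (hasABA_mono (sublist_cons_append_replicate x a st k) h), ih]
    simp

lemma phiAux_push' {x : ℕ} {st : List ℕ} (h : ¬ HasABA (x :: st)) (xs : List ℕ) :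
    phiAux (x :: xs) st = phiAux xs (x :: st) := by
  cases st with
  | nil => exact phiAux_cons_nil x xs
  | cons t st' => exact phiAux_push h xs

lemma not_hasABA_singleton (x : ℕ) : ¬ HasABA [x] :=
  not_hasABA_cons (by simp) not_hasABA_nil

lemma good_aux (a : ℕ) : ∀ (n : ℕ) (inp st1 st2 u rest : List ℕ) (k m : ℕ),
    2 * inp.length + (st1 ++ List.replicate k a ++ st2).length ≤ n →
    ¬ HasABA (st1 ++ List.replicate k a ++ st2) →
    inp = u ++ List.replicate m a ++ rest →
    a ∉ u → a ∉ rest → a ∉ st1 → a ∉ st2 →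
    (1 ≤ k → u = [] ∧ (1 ≤ m → st1 = [])) →
    GoodDecomp a (phiAux inp (st1 ++ List.replicate k a ++ st2)) := by
  intro n
  induction n using Nat.strong_induction_on with
  | _ n ih =>
  intro inp st1 st2 u rest k m hn hst hinp hu hrest hs1 hs2 hcond
  cases inp with
  | nil => rw [phiAux_nil]; exact ⟨st1, k, st2, rfl, hs1, hs2⟩
  | cons x xs =>
  rcases u with _ | ⟨c, u'⟩
  · -- u = []
    rcases m with _ | m
    · -- m = 0 : no a in input
      simp only [List.replicate, List.nil_append] at hinp
      have hrest' : a ∉ x :: xs := hinp ▸ hrest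
      have hxa : x ≠ a := fun h => hrest' (by simp [h])
      have hxs : a ∉ xs := fun h => hrest' (by simp [h])
      clear hinp hrest
      by_cases g : HasABA (x :: (st1 ++ List.replicate k a ++ st2))
      · -- pop
        cases st1 with
        | cons t st1' =>
          have ht : t ≠ a := fun h => hs1 (by simp [h])
          have hs1' : a ∉ st1' := fun h => hs1 (by simp [h])
          rw [List.cons_append, List.cons_append,
            phiAux_pop (by simpa using g)]
          refine goodDecomp_cons ht ?_
          refine ih (2 * (x :: xs).length + (st1' ++ List.replicate k a ++ st2).length)
            (by simp at hn ⊢; omega) _ _ _ [] (x :: xs) k 0 le_rfl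
            (not_hasABA_mono (by simp) hst) (by simp) (by simp) hrest' hs1' hs2 ?_
          intro hk; exact ⟨rfl, fun hm => absurd hm (by omega)⟩
        | nil =>
          rcases k with _ | k
          · -- k = 0, stack = st2
            cases st2 with
            | nil => exact absurd (by simpa using g) (not_hasABA_singleton x)
            | cons t st2' =>
              have ht : t ≠ a := fun h => hs2 (by simp [h])
              have hs2' : a ∉ st2' := fun h => hs2 (by simp [h])
              rw [show ([] : List ℕ) ++ List.replicate 0 a ++ t :: st2' = t :: st2' by simp,
                phiAux_pop (by simpa using g)]
              refine goodDecomp_cons ht ?_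
              refine ih (2 * (x :: xs).length + (([] : List ℕ) ++ List.replicate 0 a ++ st2').length)
                (by simp at hn ⊢; omega) _ _ _ [] (x :: xs) 0 0 le_rfl
                (by simpa using not_hasABA_mono (by simp) hst) (by simp) (by simp) hrest'
                (by simp) hs2' (fun hk => absurd hk (by omega))
          · -- k ≥ 1 : flush the whole a-run
            have g' : HasABA (x :: a :: st2) := by
              have := hasABA_collapse (u := [x]) (v := st2) k (by simpa using g)
              simpa using this
            rw [List.nil_append, popRun g']
            refine ⟨[], k + 1, phiAux (x :: xs) st2, rfl, by simp, ?_⟩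
            rw [mem_phiAux]
            rintro (h | h); exacts [hrest' h, hs2 h]
      · -- push
        rw [phiAux_push' (by simpa using g)]
        refine ih (2 * xs.length + ((x :: st1) ++ List.replicate k a ++ st2).length)
          (by simp at hn ⊢; omega) _ _ _ [] xs k 0 le_rfl
          (by simpa using g) (by simp) (by simp) hxs
          (by simp only [List.mem_cons]; push_neg; exact ⟨Ne.symm hxa, hs1⟩) hs2 ?_
        intro hk; exact ⟨rfl, fun hm => absurd hm (by omega)⟩
    · -- m ≥ 1 : head of input is a
      have hx : x = a ∧ xs = List.replicate m a ++ rest := by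
        rw [List.replicate_succ] at hinp
        simpa using hinp
      obtain ⟨rfl, hxs⟩ := hx
      rcases Nat.eq_zero_or_pos k with rfl | hk
      · -- k = 0
        have hnok : x ∉ st1 ++ List.replicate 0 x ++ st2 := by
          intro hmem
          rcases (by simpa using hmem : x ∈ st1 ∨ x ∈ st2) with h | h
          exacts [hs1 h, hs2 h]
        have hnok2 : x ∉ st1 ++ st2 := by
          intro hmem
          rcases (List.mem_append.mp hmem) with h | h
          exacts [hs1 h, hs2 h]
        have g : ¬ HasABA (x :: (st1 ++ List.replicate 0 x ++ st2)) :=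
          not_hasABA_cons hnok hst
        rw [phiAux_push' g]
        have e : x :: (st1 ++ List.replicate 0 x ++ st2)
            = [] ++ List.replicate 1 x ++ (st1 ++ st2) := by simp
        rw [e]
        refine ih (2 * xs.length + (([] : List ℕ) ++ List.replicate 1 x ++ (st1 ++ st2)).length)
          (by simp at hn ⊢; omega) _ _ _ [] rest 1 m le_rfl
          (by rw [← e]; exact g) hxs (by simp) hrest (by simp) hnok2 ?_
        intro _; exact ⟨rfl, fun _ => rfl⟩
      · -- k ≥ 1, st1 = []
        obtain ⟨-, hcond2⟩ := hcond hk
        have hst1 : st1 = [] := hcond2 (by omega)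
        subst hst1
        have g : ¬ HasABA (x :: ([] ++ List.replicate k x ++ st2)) := by
          intro g
          apply hst
          have : HasABA (List.replicate (k + 1) x ++ st2) := by
            rw [List.replicate_succ]; simpa using g
          have h2 : HasABA (x :: st2) := by
            have := hasABA_collapse (u := []) (v := st2) k (by simpa using this)
            simpa using this
          refine hasABA_mono ?_ h2
          simp only [List.nil_append]
          have hsub : List.Sublist ([x] ++ st2) (List.replicate k x ++ st2) := by
            refine List.Sublist.append ?_ (List.Sublist.refl st2)
            rw [List.singleton_sublist]
            exact List.mem_replicate.mpr ⟨by omega, rfl⟩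
          simpa using hsub
        rw [phiAux_push' g]
        have e : x :: ([] ++ List.replicate k x ++ st2)
            = [] ++ List.replicate (k + 1) x ++ st2 := by
          simp [List.replicate_succ]
        rw [e]
        refine ih (2 * xs.length + (([] : List ℕ) ++ List.replicate (k + 1) x ++ st2).length)
          (by simp at hn ⊢; omega) _ _ _ [] rest (k + 1) m le_rfl
          (by rw [← e]; exact g) hxs (by simp) hrest (by simp) hs2 ?_
        intro _; exact ⟨rfl, fun _ => rfl⟩
  · -- u = c :: u'
    have hx : x = c ∧ xs = u' ++ List.replicate m a ++ rest := by
      simpa using hinp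
    obtain ⟨rfl, hxs⟩ := hx
    have hxa : x ≠ a := fun h => hu (by simp [h])
    have hu' : a ∉ u' := fun h => hu (by simp [h])
    have hk : k = 0 := by
      rcases Nat.eq_zero_or_pos k with h | h
      · exact h
      · exact absurd (hcond h).1 (by simp)
    subst hk
    by_cases g : HasABA (x :: (st1 ++ List.replicate 0 a ++ st2))
    · -- pop
      cases st1 with
      | cons t st1' =>
        have ht : t ≠ a := fun h => hs1 (by simp [h])
        have hs1' : a ∉ st1' := fun h => hs1 (by simp [h])
        rw [List.cons_append, List.cons_append,
          phiAux_pop (by simpa using g)]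
        refine goodDecomp_cons ht ?_
        refine ih (2 * (x :: xs).length + (st1' ++ List.replicate 0 a ++ st2).length)
          (by simp at hn ⊢; omega) _ _ _ (x :: u') rest 0 m le_rfl
          (not_hasABA_mono (by simp) hst) (by simp [hxs]) (by simp only [List.mem_cons]; push_neg; exact ⟨Ne.symm hxa, hu'⟩) hrest
          hs1' hs2 (fun hkk => absurd hkk (by omega))
      | nil =>
        cases st2 with
        | nil => exact absurd (by simpa using g) (not_hasABA_singleton x)
        | cons t st2' =>
          have ht : t ≠ a := fun h => hs2 (by simp [h])
          have hs2' : a ∉ st2' := fun h => hs2 (by simp [h])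
          rw [show ([] : List ℕ) ++ List.replicate 0 a ++ t :: st2' = t :: st2' by simp,
            phiAux_pop (by simpa using g)]
          refine goodDecomp_cons ht ?_
          refine ih (2 * (x :: xs).length + (([] : List ℕ) ++ List.replicate 0 a ++ st2').length)
            (by simp at hn ⊢; omega) _ _ _ (x :: u') rest 0 m le_rfl
            (by simpa using not_hasABA_mono (by simp) hst) (by simp [hxs])
            (by simp only [List.mem_cons]; push_neg; exact ⟨Ne.symm hxa, hu'⟩) hrest (by simp) hs2'
            (fun hkk => absurd hkk (by omega))
    · -- push
      rw [phiAux_push' (by simpa using g)]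
      refine ih (2 * xs.length + ((x :: st1) ++ List.replicate 0 a ++ st2).length)
        (by simp at hn ⊢; omega) _ _ _ u' rest 0 m le_rfl
        (by simpa using g) hxs hu' hrest
        (by simp only [List.mem_cons]; push_neg; exact ⟨Ne.symm hxa, hs1⟩) hs2
        (fun hkk => absurd hkk (by omega))

lemma phiAux_sorted_prefix : ∀ (u tail st : List ℕ), ¬ HasABA (u.reverse ++ st) →
    phiAux (u ++ tail) st = phiAux tail (u.reverse ++ st) := by
  intro u
  induction u with
  | nil => intro tail st _; simp
  | cons c u' ih =>
    intro tail st h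
    have hre : u'.reverse ++ (c :: st) = (c :: u').reverse ++ st := by simp
    have hg : ¬ HasABA (c :: st) := by
      refine not_hasABA_mono ?_ h
      simp only [List.reverse_cons, List.append_assoc]
      exact List.sublist_append_right _ _
    rw [List.cons_append, phiAux_push' hg, ih tail (c :: st) (by rw [hre]; exact h), hre]

lemma bottom_aux (a : ℕ) : ∀ (n : ℕ) (inp st1 st0 : List ℕ) (k : ℕ),
    2 * inp.length + (st1 ++ List.replicate k a ++ st0).length ≤ n →
    ¬ HasABA (st1 ++ List.replicate k a ++ st0) →
    a ∉ st1 → a ∉ st0 → (∀ c ∈ st0, c ∉ inp) → 1 ≤ k →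
    ∃ w, phiAux inp (st1 ++ List.replicate k a ++ st0)
        = w ++ List.replicate (k + inp.count a) a ++ st0 ∧ a ∉ w := by
  intro n
  induction n using Nat.strong_induction_on with
  | _ n ih =>
  intro inp st1 st0 k hn hst hs1 hs0 h0 hk
  cases inp with
  | nil =>
    rw [phiAux_nil]
    exact ⟨st1, by simp, hs1⟩
  | cons x xs =>
  have h0' : ∀ c ∈ st0, c ∉ xs := fun c hc hm => h0 c hc (by simp [hm])
  by_cases hxa : x = a
  · subst hxa
    cases st1 with
    | nil =>
      -- push x = a onto the a-run
      have g : ¬ HasABA (x :: ([] ++ List.replicate k x ++ st0)) := by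
        intro g
        apply hst
        have h2 : HasABA (x :: st0) := by
          have := hasABA_collapse (u := []) (v := st0) k (by simpa [List.replicate_succ] using g)
          simpa using this
        refine hasABA_mono ?_ h2
        simp only [List.nil_append]
        have hsub : List.Sublist ([x] ++ st0) (List.replicate k x ++ st0) :=
          List.Sublist.append
            (by rw [List.singleton_sublist]; exact List.mem_replicate.mpr ⟨by omega, rfl⟩)
            (List.Sublist.refl st0)
        simpa using hsub
      rw [phiAux_push' g]
      have e : x :: ([] ++ List.replicate k x ++ st0)
          = [] ++ List.replicate (k + 1) x ++ st0 := by simp [List.replicate_succ]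
      rw [e]
      obtain ⟨w, hw, hwa⟩ := ih (2 * xs.length + (([] : List ℕ) ++ List.replicate (k + 1) x ++ st0).length)
        (by simp at hn ⊢; omega) xs [] st0 (k + 1) le_rfl (by rw [← e]; exact g)
        (by simp) hs0 h0' (by omega)
      refine ⟨w, ?_, hwa⟩
      rw [hw]
      have : k + 1 + xs.count x = k + (x :: xs).count x := by
        simp [List.count_cons]; omega
      rw [this]
    | cons t st1' =>
      -- pop t
      have ht : t ≠ x := fun h => hs1 (by simp [h])
      have hs1' : x ∉ st1' := fun h => hs1 (by simp [h])
      have g : HasABA (x :: t :: (st1' ++ List.replicate k x ++ st0)) := by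
        rw [hasABA_iff]
        refine ⟨x, t, fun h => ht h.symm, ?_⟩
        refine List.Sublist.cons₂ _ (List.Sublist.cons₂ _ ?_)
        rw [List.singleton_sublist]
        simp [List.mem_replicate]
        omega
      rw [List.cons_append, List.cons_append, phiAux_pop g]
      obtain ⟨w, hw, hwa⟩ := ih (2 * (x :: xs).length + ((st1' ++ List.replicate k x ++ st0)).length)
        (by simp at hn ⊢; omega) (x :: xs) st1' st0 k le_rfl
        (not_hasABA_mono (by simp) hst) hs1' hs0 h0 hk
      exact ⟨t :: w, by rw [hw]; simp, by simp [Ne.symm ht, hwa]⟩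
  · -- x ≠ a
    cases st1 with
    | nil =>
      have hxst0 : x ∉ st0 := fun hm => h0 x hm (by simp)
      have g : ¬ HasABA (x :: ([] ++ List.replicate k a ++ st0)) := by
        apply not_hasABA_cons ?_ (by simpa using hst)
        simp [List.mem_replicate, hxa, hxst0]
      rw [phiAux_push' g]
      have e : x :: ([] ++ List.replicate k a ++ st0) = [x] ++ List.replicate k a ++ st0 := by simp
      rw [e]
      obtain ⟨w, hw, hwa⟩ := ih (2 * xs.length + ([x] ++ List.replicate k a ++ st0).length)
        (by simp at hn ⊢; omega) xs [x] st0 k le_rfl (by rw [← e]; exact g)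
        (by simp [Ne.symm hxa]) hs0 h0' hk
      refine ⟨w, ?_, hwa⟩
      rw [hw, List.count_cons_of_ne hxa]
    | cons t st1' =>
      have ht : t ≠ a := fun h => hs1 (by simp [h])
      have hs1' : a ∉ st1' := fun h => hs1 (by simp [h])
      by_cases g : HasABA (x :: t :: (st1' ++ List.replicate k a ++ st0))
      · rw [List.cons_append, List.cons_append, phiAux_pop g]
        obtain ⟨w, hw, hwa⟩ := ih (2 * (x :: xs).length + ((st1' ++ List.replicate k a ++ st0)).length)
          (by simp at hn ⊢; omega) (x :: xs) st1' st0 k le_rfl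
          (not_hasABA_mono (by simp) hst) hs1' hs0 h0 hk
        exact ⟨t :: w, by rw [hw]; simp, by simp [Ne.symm ht, hwa]⟩
      · rw [List.cons_append, List.cons_append, phiAux_push g]
        have e : x :: t :: (st1' ++ List.replicate k a ++ st0)
            = (x :: t :: st1') ++ List.replicate k a ++ st0 := by simp
        rw [e]
        obtain ⟨w, hw, hwa⟩ := ih (2 * xs.length + ((x :: t :: st1') ++ List.replicate k a ++ st0).length)
          (by simp at hn ⊢; omega) xs (x :: t :: st1') st0 k le_rfl
          (by rw [← e]; simpa using g)
          (by simp [Ne.symm hxa, Ne.symm ht]; exact hs1') hs0 h0' hk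
        refine ⟨w, ?_, hwa⟩
        rw [hw, List.count_cons_of_ne hxa]

lemma not_bad_phi {a : ℕ} {p : List ℕ} (h : ¬ Bad a p) : ¬ Bad a (phi p) := by
  obtain ⟨u, k, v, heq, hu, hv⟩ := not_bad_goodDecomp h
  apply goodDecomp_not_bad
  have := good_aux a (2 * p.length) p [] [] u v 0 k (by simp) (by simpa using not_hasABA_nil)
    heq hu hv (by simp) (by simp) (fun hk => absurd hk (by omega))
  simpa [phi] using this

lemma exists_earliest_bad : ∀ {p : List ℕ}, ¬ SortedWord p →
    ∃ u a rest, p = u ++ a :: rest ∧ Bad a p ∧ a ∉ u ∧ ∀ c ∈ u, ¬ Bad c p := by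
  intro p
  induction p with
  | nil => intro h; exact absurd (fun i _ _ _ _ _ => i.elim0) h
  | cons c p' ih =>
    intro h
    by_cases hc : Bad c (c :: p')
    · exact ⟨[], c, p', rfl, hc, by simp, by simp⟩
    · have hps : ¬ SortedWord p' := by
        intro hs
        apply h
        rw [sortedWord_iff] at hs ⊢
        rw [hasABA_iff_bad] at hs ⊢
        rintro ⟨d, b, hb, hsub⟩
        rcases List.sublist_cons_iff.mp hsub with h' | ⟨r, hr, hr'⟩
        · exact hs ⟨d, b, hb, h'⟩
        · have hdc : d = c := (List.cons_eq_cons.mp hr).1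
          subst hdc
          exact hc ⟨b, hb, hsub⟩
      obtain ⟨u, a, rest, heq, hbad, hau, hgood⟩ := ih hps
      refine ⟨c :: u, a, rest, by simp [heq], bad_mono (List.sublist_cons_self c p') hbad, ?_, ?_⟩
      · simp only [List.mem_cons]
        rintro (rfl | hm)
        · exact hc (bad_mono (List.sublist_cons_self a p') hbad)
        · exact hau hm
      · rintro d hd
        rcases List.mem_cons.mp hd with rfl | hd'
        · exact hc
        · intro hbd
          by_cases hdc : d = c
          · exact hc (hdc ▸ hbd)
          · apply hgood d hd'
            obtain ⟨b, hb, hsub⟩ := hbd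
            rcases List.sublist_cons_iff.mp hsub with h' | ⟨r, hr, hr'⟩
            · exact ⟨b, hb, h'⟩
            · exact absurd (List.cons_eq_cons.mp hr).1 hdc

lemma earliest_killed {p : List ℕ} (h : ¬ SortedWord p) :
    ∃ a, Bad a p ∧ ¬ Bad a (phi p) := by
  obtain ⟨u, a, rest, rfl, hbad, hau, hgood⟩ := exists_earliest_bad h
  refine ⟨a, hbad, ?_⟩
  have hnotin : ∀ c ∈ u, c ∉ rest := by
    intro c hcu hcr
    have hca : c ≠ a := fun hh => hau (hh ▸ hcu)
    apply hgood c hcu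
    refine ⟨a, fun hh => hca hh.symm, ?_⟩
    have h1 : List.Sublist [c] u := List.singleton_sublist.mpr hcu
    have h2 : List.Sublist [a, c] (a :: rest) :=
      List.Sublist.cons₂ _ (List.singleton_sublist.mpr hcr)
    simpa using h1.append h2
  have hrevOK : ¬ HasABA u.reverse := by
    rw [hasABA_iff]
    rintro ⟨c, d, hcd, hsub⟩
    have h2 : List.Sublist ([c, d, c].reverse) u.reverse := by simpa using hsub
    have hsub' : List.Sublist [c, d, c] u := List.reverse_sublist.mp h2
    have hcu : c ∈ u := hsub'.subset (by simp)
    exact hgood c hcu ⟨d, fun hh => hcd hh.symm,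
      hsub'.trans (List.sublist_append_left _ _)⟩
  have harev : a ∉ u.reverse := fun hm => hau (List.mem_reverse.mp hm)
  have hga : ¬ HasABA (a :: u.reverse) := not_hasABA_cons harev hrevOK
  have e1 : phi (u ++ a :: rest) = phiAux rest (a :: u.reverse) := by
    rw [phi, phiAux_sorted_prefix u (a :: rest) [] (by simpa using hrevOK),
      List.append_nil, phiAux_push' hga]
  have e2 : a :: u.reverse = [] ++ List.replicate 1 a ++ u.reverse := by simp
  obtain ⟨w, hw, hwa⟩ := bottom_aux a
    (2 * rest.length + (([] : List ℕ) ++ List.replicate 1 a ++ u.reverse).length)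
    rest [] u.reverse 1 le_rfl (by rw [← e2]; exact hga) (by simp) harev
    (fun c hc => hnotin c (List.mem_reverse.mp hc)) le_rfl
  apply goodDecomp_not_bad
  rw [e1, e2, hw]
  exact ⟨w, 1 + rest.count a, u.reverse, rfl, hwa, harev⟩

lemma bad_mem {a : ℕ} {p : List ℕ} (h : Bad a p) : a ∈ p := by
  obtain ⟨b, _, hsub⟩ := h
  exact hsub.subset (by simp)

noncomputable def badFinset (p : List ℕ) : Finset ℕ :=
  @Finset.filter _ (fun a => Bad a p) (Classical.decPred _) p.toFinset

lemma mem_badFinset {a : ℕ} {p : List ℕ} : a ∈ badFinset p ↔ Bad a p := by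
  rw [badFinset, @Finset.mem_filter _ _ (Classical.decPred _)]
  constructor
  · exact fun h => h.2
  · exact fun h => ⟨List.mem_toFinset.mpr (bad_mem h), h⟩

lemma sortedWord_iff_no_bad {p : List ℕ} : SortedWord p ↔ ∀ a, ¬ Bad a p := by
  rw [sortedWord_iff, hasABA_iff_bad]; push_neg; rfl

lemma sortedWord_key : ∀ (n : ℕ) (p : List ℕ), (badFinset p).card ≤ n →
    SortedWord (phi^[n] p) := by
  intro n
  induction n with
  | zero =>
    intro p hp
    rw [Function.iterate_zero_apply]
    rw [sortedWord_iff_no_bad]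
    intro a hbad
    have : a ∈ badFinset p := mem_badFinset.mpr hbad
    have := Finset.card_pos.mpr ⟨a, this⟩
    omega
  | succ n ih =>
    intro p hp
    rw [Function.iterate_succ_apply]
    apply ih
    by_cases hs : SortedWord p
    · have : badFinset (phi p) = ∅ := by
        rw [Finset.eq_empty_iff_forall_notMem]
        intro a ha
        exact not_bad_phi ((sortedWord_iff_no_bad.mp hs) a) (mem_badFinset.mp ha)
      simp [this]
    · obtain ⟨a, hbad, hgood⟩ := earliest_killed hs
      have hsubset : badFinset (phi p) ⊆ (badFinset p).erase a := by
        intro b hb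
        have hbb : Bad b (phi p) := mem_badFinset.mp hb
        have hbp : Bad b p := by
          by_contra hbc
          exact not_bad_phi hbc hbb
        refine Finset.mem_erase.mpr ⟨?_, mem_badFinset.mpr hbp⟩
        rintro rfl
        exact hgood hbb
      have h1 : (badFinset (phi p)).card ≤ ((badFinset p).erase a).card :=
        Finset.card_le_card hsubset
      have h2 : ((badFinset p).erase a).card = (badFinset p).card - 1 :=
        Finset.card_erase_of_mem (mem_badFinset.mpr hbad)
      have h3 : 1 ≤ (badFinset p).card :=
        Finset.card_pos.mpr ⟨a, mem_badFinset.mpr hbad⟩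
      omega


/-- Applying φ_{aba} at most N(p) times sorts any set partition word. -/
theorem stmt6 (p : List ℕ) : SortedWord (phi^[Nletters p] p) := by
  apply sortedWord_key
  exact Finset.card_le_card
    (fun a ha => ((@Finset.mem_filter _ _ (Classical.decPred _) _ _).mp ha).1)
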